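/- (Sum rule under epigraph additivity) Let X be a nonempty set and 𝓛 a space of abstract linear functions on X equipped with the subspace topology of pointwise convergence, and let f₁, …, f_m : X → ℝ ∪ {+∞} (m ≥ 2) with ⋂_{i=1}^m dom f_i ≠ ∅. Assume cl( Σ_{i=1}^m epi f_i* ) = epi (Σ_{i=1}^m f_i)*, where the closure is taken in 𝓛 × ℝ with the product of the pointwise convergence topology on 𝓛 and the standard topology on ℝ, and the sum of epigraphs is the Minkowski sum. Then for every x ∈ ⋂_{i=1}^m dom f_i and every ε ≥ 0, ∂_ε(Σ_{i=1}^m f_i)(x) = ⋂_{η>0} cl( ⋃ { Σ_{i=1}^m ∂_{ε_i} f_i(x) : ε_i ≥ 0, Σ_{i=1}^m ε_i = ε + η } ). -/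

import Mathlib

open Set
open scoped Pointwise

variable {X : Type*}

/-- A space of abstract linear functions on `X`: a nonempty family of real-valued
functions closed under addition, each of whose members admits additive decompositions
of every length `m ≥ 1` inside the family. -/
def IsLinSpace (L : Set (X → ℝ)) : Prop :=
  L.Nonempty ∧
    (∀ l₁ ∈ L, ∀ l₂ ∈ L, l₁ + l₂ ∈ L) ∧
    (∀ l ∈ L, ∀ m : ℕ, 1 ≤ m →
      ∃ g : Fin m → (X → ℝ), (∀ i, g i ∈ L) ∧ l = ∑ i, g i)

/-- Fenchel conjugate of `f : X → ℝ ∪ {+∞}`: `f*(l) = sup_x (l x - f x)`. -/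
noncomputable def fconj (f : X → EReal) (l : X → ℝ) : EReal :=
  ⨆ x : X, ((l x : EReal) - f x)

/-- Abstract biconjugate `f**(x) = sup_{l ∈ L} (l x - f*(l))`. -/
noncomputable def biconj (L : Set (X → ℝ)) (f : X → EReal) (x : X) : EReal :=
  ⨆ l ∈ L, ((l x : EReal) - fconj f l)

/-- ε-subdifferential of `f` at `x` (empty whenever `x ∉ dom f`, i.e. `f x = ⊤`):
`l ∈ ∂_ε f(x)` iff `l ∈ L`, `f x < ⊤` and `f y - f x - (l y - l x) + ε ≥ 0` for all `y`. -/
def subdiff (L : Set (X → ℝ)) (f : X → EReal) (ε : ℝ) (x : X) : Set (X → ℝ) :=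
  {l | l ∈ L ∧ f x < ⊤ ∧ ∀ y, f x + ((l y - l x : ℝ) : EReal) ≤ f y + (ε : EReal)}

/-- Minkowski sum of finitely many subsets of an additive commutative monoid. -/
def minkSum {α : Type*} [AddCommMonoid α] {m : ℕ} (S : Fin m → Set α) : Set α :=
  {a | ∃ g : Fin m → α, (∀ i, g i ∈ S i) ∧ a = ∑ i, g i}

/-- Infimal convolution (over `L`) of finitely many functions,
with the infimum over the empty set equal to `+∞`. -/
noncomputable def infConv (L : Set (X → ℝ)) {m : ℕ}
    (φ : Fin m → (X → ℝ) → EReal) (l : X → ℝ) : EReal :=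
  ⨅ (g : Fin m → (X → ℝ)) (_ : ∀ i, g i ∈ L) (_ : ∑ i, g i = l), ∑ i, φ i (g i)

/-- The space of abstract affine functions generated by `L`: vertical shifts of members of `L`. -/
def Hspace (L : Set (X → ℝ)) : Set (X → ℝ) :=
  {h | ∃ l ∈ L, ∃ c : ℝ, h = fun x => l x + c}

/-- Support set of `f` inside a family `H` of functions: all members of `H` minorizing `f`. -/
def suppIn (H : Set (X → ℝ)) (f : X → EReal) : Set (X → ℝ) :=
  {h | h ∈ H ∧ ∀ x, (h x : EReal) ≤ f x}

/-- `f` is abstract convex w.r.t. the family `H`: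
`f` is the upper envelope of a nonempty subfamily of `H`. -/
def ConvexIn (H : Set (X → ℝ)) (f : X → EReal) : Prop :=
  ∃ S : Set (X → ℝ), S.Nonempty ∧ S ⊆ H ∧ ∀ x, f x = ⨆ h ∈ S, (h x : EReal)

/-- Abstract convexity of a subset `C` of the family `L` (separation property):
every `l₀ ∈ L \ C` is strictly separated from `C` at some point of `X`. -/
def ConvexSetIn (L : Set (X → ℝ)) (C : Set (X → ℝ)) : Prop :=
  C ⊆ L ∧ ∀ l₀ ∈ L, l₀ ∉ C → ∃ x, (⨆ l ∈ C, (l x : EReal)) < (l₀ x : EReal)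

/-- Epigraph of the conjugate of `f`, as a subset of `𝓛 × ℝ`. -/
def epiConj (L : Set (X → ℝ)) (f : X → EReal) : Set ((X → ℝ) × ℝ) :=
  {p | p.1 ∈ L ∧ fconj f p.1 ≤ (p.2 : EReal)}

section Aux

lemma ereal_coe_sum {ι : Type*} (s : Finset ι) (a : ι → ℝ) :
    ((∑ i ∈ s, a i : ℝ) : EReal) = ∑ i ∈ s, ((a i : ℝ) : EReal) := by
  classical
  induction s using Finset.induction with
  | empty => simp
  | insert _ _ h ih => rw [Finset.sum_insert h, Finset.sum_insert h, EReal.coe_add, ih]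

lemma ereal_sum_ne_bot {ι : Type*} (s : Finset ι) (g : ι → EReal) (h : ∀ i ∈ s, g i ≠ ⊥) :
    ∑ i ∈ s, g i ≠ ⊥ := by
  classical
  induction s using Finset.induction with
  | empty => simp
  | insert _ _ hns ih =>
      rw [Finset.sum_insert hns]
      intro hbot
      rcases EReal.add_eq_bot_iff.1 hbot with h1 | h1
      · exact h _ (Finset.mem_insert_self _ _) h1
      · exact ih (fun i hi => h i (Finset.mem_insert_of_mem hi)) h1

end Aux

/-- sum rule under epigraph additivity: if the closure (in `𝓛 × ℝ`)
of the Minkowski sum of the epigraphs of the conjugates equals the epigraph of the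
conjugate of the sum, then the sum rule with closures holds at every common domain
point and every `ε ≥ 0`. -/
theorem stmt16 [Nonempty X] (L : Set (X → ℝ)) (hL : IsLinSpace L)
    (m : ℕ) (hm : 2 ≤ m) (f : Fin m → X → EReal) (hf : ∀ i y, f i y ≠ ⊥)
    (hdom : ∃ x, ∀ i, f i x < ⊤)
    (hepi : closure (minkSum fun i => epiConj L (f i)) ∩ {p : (X → ℝ) × ℝ | p.1 ∈ L}
      = epiConj L (fun x => ∑ i, f i x)) :
    ∀ x : X, (∀ i, f i x < ⊤) → ∀ ε : ℝ, 0 ≤ ε →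
      subdiff L (fun y => ∑ i, f i y) ε x =
        ⋂ (η : ℝ) (_ : 0 < η),
          (closure (⋃ (e : Fin m → ℝ) (_ : ∀ i, 0 ≤ e i) (_ : ∑ i, e i = ε + η),
            minkSum fun i => subdiff L (f i) (e i) x) ∩ L) := by
  intro x hx ε hε
  classical
  have hfx_ne_top : ∀ i, f i x ≠ ⊤ := fun i => (hx i).ne
  set a : Fin m → ℝ := fun i => (f i x).toReal with ha_def
  have ha : ∀ i, f i x = ((a i : ℝ) : EReal) := fun i =>
    (EReal.coe_toReal (hfx_ne_top i) (hf i x)).symm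
  set c : ℝ := ∑ i, a i with hc_def
  have hFx : ∑ i, f i x = ((c : ℝ) : EReal) := by
    rw [hc_def, ereal_coe_sum]
    exact Finset.sum_congr rfl fun i _ => ha i
  have hFy_ne_bot : ∀ y, ∑ i, f i y ≠ ⊥ := fun y =>
    ereal_sum_ne_bot _ _ fun i _ => hf i y
  set S : Set ((X → ℝ) × ℝ) := minkSum fun i => epiConj L (f i) with hS_def
  set U : ℝ → Set (X → ℝ) := fun η =>
    ⋃ (e : Fin m → ℝ) (_ : ∀ i, 0 ≤ e i) (_ : ∑ i, e i = ε + η),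
      minkSum fun i => subdiff L (f i) (e i) x with hU_def
  apply Set.Subset.antisymm
  · -- ⊆ direction
    rintro l ⟨hlL, hFlt, hineq⟩
    have hineq' : ∀ y, ∑ i, f i x + ((l y - l x : ℝ) : EReal) ≤ ∑ i, f i y + (ε : EReal) :=
      hineq
    refine Set.mem_iInter₂.2 fun η hη => ?_
    set r : ℝ := l x - c + ε with hr_def
    have hconj : fconj (fun y => ∑ i, f i y) l ≤ ((r : ℝ) : EReal) := by
      refine iSup_le fun y => ?_
      show ((l y : ℝ) : EReal) - ∑ i, f i y ≤ ((r : ℝ) : EReal)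
      rcases eq_or_ne (∑ i, f i y) ⊤ with hy | hy
      · rw [hy, EReal.sub_top]; exact bot_le
      · have hb : ∑ i, f i y = (((∑ i, f i y).toReal : ℝ) : EReal) :=
          (EReal.coe_toReal hy (hFy_ne_bot y)).symm
        set b : ℝ := (∑ i, f i y).toReal
        have h1 := hineq' y
        simp only [hFx, hb] at h1 ⊢
        have h2 : c + (l y - l x) ≤ b + ε := by exact_mod_cast h1
        have h3 : l y - b ≤ r := by rw [hr_def]; linarith
        exact_mod_cast h3
    have hmemepi : ((l, r) : (X → ℝ) × ℝ) ∈ epiConj L (fun x => ∑ i, f i x) :=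
      ⟨hlL, hconj⟩
    rw [← hepi] at hmemepi
    have hclS : ((l, r) : (X → ℝ) × ℝ) ∈ closure S := hmemepi.1
    set V : Set ((X → ℝ) × ℝ) := {p | p.2 - p.1 x < ε + η - c} with hV_def
    have hVopen : IsOpen V :=
      isOpen_lt (continuous_snd.sub ((continuous_apply x).comp continuous_fst))
        continuous_const
    have hlrV : ((l, r) : (X → ℝ) × ℝ) ∈ V := by
      simp only [hV_def, Set.mem_setOf_eq, hr_def]
      linarith
    have hclVS : ((l, r) : (X → ℝ) × ℝ) ∈ closure (V ∩ S) :=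
      hVopen.inter_closure ⟨hlrV, hclS⟩
    have hmaps : Set.MapsTo Prod.fst (V ∩ S) (U η) := by
      rintro p ⟨hpV, q, hq, rfl⟩
      set g : Fin m → (X → ℝ) := fun i => (q i).1 with hg_def
      set t : Fin m → ℝ := fun i => (q i).2 with ht_def
      have hgL : ∀ i, g i ∈ L := fun i => (hq i).1
      have hconj_i : ∀ i, fconj (f i) (g i) ≤ ((t i : ℝ) : EReal) := fun i => (hq i).2
      have hiy : ∀ i y, ((g i y : ℝ) : EReal) - f i y ≤ ((t i : ℝ) : EReal) := by
        intro i y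
        exact le_trans (le_iSup (fun z => ((g i z : ℝ) : EReal) - f i z) y) (hconj_i i)
      have hei : ∀ i, g i x - a i ≤ t i := by
        intro i
        have h1 := hiy i x
        rw [ha i] at h1
        exact_mod_cast h1
      set e : Fin m → ℝ := fun i => t i - g i x + a i with he_def
      have he0 : ∀ i, 0 ≤ e i := fun i => by
        have := hei i; simp only [he_def]; linarith
      have hfst : (∑ i, q i).1 = ∑ i, g i := Prod.fst_sum
      have hsnd : (∑ i, q i).2 = ∑ i, t i := Prod.snd_sum
      have hsum_e : ∑ i, e i = (∑ i, q i).2 - (∑ i, q i).1 x + c := by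
        rw [hfst, hsnd, hc_def, Finset.sum_apply]
        simp only [he_def]
        rw [Finset.sum_add_distrib, Finset.sum_sub_distrib]
      have hpVlt : ∑ i, e i < ε + η := by
        have := hpV
        simp only [hV_def, Set.mem_setOf_eq] at this
        rw [hsum_e]; linarith
      set δ : ℝ := ε + η - ∑ i, e i with hδ_def
      have hδ : 0 < δ := by simp only [hδ_def]; linarith
      set j0 : Fin m := ⟨0, by omega⟩ with hj0_def
      set e' : Fin m → ℝ := Function.update e j0 (e j0 + δ) with he'_def
      have he'ge : ∀ i, e i ≤ e' i := by
        intro i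
        rcases eq_or_ne i j0 with hij | hij
        · subst hij; simp only [he'_def, Function.update_self]; linarith
        · simp only [he'_def, Function.update_of_ne hij, le_refl]
      have he'0 : ∀ i, 0 ≤ e' i := fun i => le_trans (he0 i) (he'ge i)
      have hsum_e' : ∑ i, e' i = ε + η := by
        have h6 := Finset.sum_eq_sum_sdiff_singleton_add (Finset.mem_univ j0) e
        rw [he'_def, Finset.sum_update_of_mem (Finset.mem_univ j0)]
        simp only [hδ_def]
        linarith
      have hsub : ∀ i, g i ∈ subdiff L (f i) (e' i) x := by
        intro i
        refine ⟨hgL i, hx i, fun y => ?_⟩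
        rcases eq_or_ne (f i y) ⊤ with hy | hy
        · rw [hy, EReal.top_add_of_ne_bot (EReal.coe_ne_bot _)]
          exact le_top
        · have hb : f i y = (((f i y).toReal : ℝ) : EReal) :=
            (EReal.coe_toReal hy (hf i y)).symm
          have h1 := hiy i y
          rw [hb] at h1 ⊢
          rw [ha i]
          have h2 : g i y - (f i y).toReal ≤ t i := by exact_mod_cast h1
          have h3 : e i ≤ e' i := he'ge i
          have h4 : a i + (g i y - g i x) ≤ (f i y).toReal + e' i := by
            simp only [he_def] at h3
            linarith
          exact_mod_cast h4
      refine Set.mem_iUnion.2 ⟨e', Set.mem_iUnion.2 ⟨he'0, Set.mem_iUnion.2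
        ⟨hsum_e', ⟨g, hsub, hfst⟩⟩⟩⟩
    have hlcl : l ∈ closure (U η) := by
      have := map_mem_closure continuous_fst hclVS hmaps
      simpa using this
    exact ⟨hlcl, hlL⟩
  · -- ⊇ direction
    intro l hl
    have h1 := Set.mem_iInter₂.1 hl 1 one_pos
    have hlL : l ∈ L := h1.2
    refine ⟨hlL, by show ∑ i, f i x < ⊤; rw [hFx]; exact EReal.coe_lt_top c, fun y => ?_⟩
    show ∑ i, f i x + ((l y - l x : ℝ) : EReal) ≤ ∑ i, f i y + (ε : EReal)
    rcases eq_or_ne (∑ i, f i y) ⊤ with hy | hy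
    · rw [hy, EReal.top_add_of_ne_bot (EReal.coe_ne_bot _)]
      exact le_top
    · have hb : ∑ i, f i y = (((∑ i, f i y).toReal : ℝ) : EReal) :=
        (EReal.coe_toReal hy (hFy_ne_bot y)).symm
      set b : ℝ := (∑ i, f i y).toReal with hb_def
      have key : ∀ η : ℝ, 0 < η → c + (l y - l x) ≤ b + ε + η := by
        intro η hη
        have hcl : l ∈ closure (U η) := (Set.mem_iInter₂.1 hl η hη).1
        set C : Set (X → ℝ) := {q | q y - q x ≤ b + ε + η - c} with hC_def
        have hCclosed : IsClosed C :=
          isClosed_le ((continuous_apply y).sub (continuous_apply x)) continuous_const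
        have hUC : U η ⊆ C := by
          intro q hq
          simp only [hU_def, Set.mem_iUnion] at hq
          obtain ⟨e, he0, hesum, g, hg, rfl⟩ := hq
          have hsum := Finset.sum_le_sum (fun i (_ : i ∈ Finset.univ) => (hg i).2.2 y)
          rw [Finset.sum_add_distrib, Finset.sum_add_distrib] at hsum
          rw [hFx, hb, ← ereal_coe_sum, ← ereal_coe_sum] at hsum
          have h2 : c + ∑ i, (g i y - g i x) ≤ b + ∑ i, e i := by exact_mod_cast hsum
          rw [Finset.sum_sub_distrib, hesum] at h2
          simp only [hC_def, Set.mem_setOf_eq, Finset.sum_apply]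
          linarith
        have hmem : l ∈ C := closure_minimal hUC hCclosed hcl
        simp only [hC_def, Set.mem_setOf_eq] at hmem
        linarith
      have hfin : c + (l y - l x) ≤ b + ε := by
        by_contra hcon
        push_neg at hcon
        have := key ((c + (l y - l x) - (b + ε)) / 2) (by linarith)
        linarith
      rw [hFx, hb]
      exact_mod_cast hfin
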